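/- Let A ∈ R^{m×n} satisfy the (s+s')-restricted isometry property with constant δ_{s+s'} ∈ (0,1). Then for any disjoint index sets S, T ⊆ {1,…,n} with |S| ≤ s and |T| ≤ s', the spectral norm of A_S^T A_T satisfies ‖A_S^T A_T‖₂ ≤ δ_{s+s'}. -/

import Mathlib

noncomputable def eucNorm {ι : Type*} [Fintype ι] (v : ι → ℝ) : ℝ := Real.sqrt (∑ i, v i ^ 2)

def Sparse {n : ℕ} (s : ℕ) (x : Fin n → ℝ) : Prop :=
  ∃ S : Finset (Fin n), S.card ≤ s ∧ ∀ i ∉ S, x i = 0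

def RIP {m n : ℕ} (A : Matrix (Fin m) (Fin n) ℝ) (s : ℕ) (δ : ℝ) : Prop :=
  ∀ x : Fin n → ℝ, Sparse s x →
    (1 - δ) * (eucNorm x)^2 ≤ (eucNorm (A.mulVec x))^2 ∧
      (eucNorm (A.mulVec x))^2 ≤ (1 + δ) * (eucNorm x)^2

def colSub {m n : ℕ} (A : Matrix (Fin m) (Fin n) ℝ) (S : Finset (Fin n)) :
    Matrix (Fin m) S ℝ := fun i j => A i (j : Fin n)

open Finset Matrix

lemma enorm_sq {ι : Type*} [Fintype ι] (v : ι → ℝ) : eucNorm v ^ 2 = ∑ i, v i ^ 2 := by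
  rw [eucNorm, Real.sq_sqrt (by positivity)]

lemma enorm_nonneg {ι : Type*} [Fintype ι] (v : ι → ℝ) : 0 ≤ eucNorm v := Real.sqrt_nonneg _

/-- extension of a vector on `S` by zero. -/
def extend {n : ℕ} (S : Finset (Fin n)) (w : S → ℝ) : Fin n → ℝ :=
  fun i => if h : i ∈ S then w ⟨i, h⟩ else 0

lemma extend_mem {n : ℕ} (S : Finset (Fin n)) (w : S → ℝ) (j : S) :
    extend S w (j : Fin n) = w j := by
  simp [extend, j.2]

lemma extend_not_mem {n : ℕ} (S : Finset (Fin n)) (w : S → ℝ) {i : Fin n} (hi : i ∉ S) :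
    extend S w i = 0 := dif_neg hi

lemma sum_sq_extend {n : ℕ} (S : Finset (Fin n)) (w : S → ℝ) :
    ∑ i, extend S w i ^ 2 = ∑ j, w j ^ 2 := by
  rw [← Finset.sum_subset (Finset.subset_univ S)
      (fun i _ hi => by rw [extend_not_mem S w hi]; ring),
    ← Finset.sum_coe_sort S (fun i => extend S w i ^ 2)]
  exact Finset.sum_congr rfl fun j _ => by rw [extend_mem]

lemma mulVec_extend {m n : ℕ} (A : Matrix (Fin m) (Fin n) ℝ) (S : Finset (Fin n)) (w : S → ℝ) :
    A.mulVec (extend S w) = (colSub A S).mulVec w := by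
  funext i
  simp only [Matrix.mulVec, dotProduct]
  rw [← Finset.sum_subset (Finset.subset_univ S)
      (fun j _ hj => by rw [extend_not_mem S w hj]; ring),
    ← Finset.sum_coe_sort S (fun j => A i j * extend S w j)]
  exact Finset.sum_congr rfl fun j _ => by rw [extend_mem]; rfl

lemma dot_polar {ι : Type*} [Fintype ι] (a b : ι → ℝ) :
    a ⬝ᵥ b = ((∑ i, (a i + b i) ^ 2) - (∑ i, (a i - b i) ^ 2)) / 4 := by
  rw [← Finset.sum_sub_distrib, Finset.sum_div, dotProduct]
  exact Finset.sum_congr rfl fun i _ => by ring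

lemma inner_bound {m n s s' : ℕ} (A : Matrix (Fin m) (Fin n) ℝ) (δ : ℝ)
    (hRIP : RIP A (s + s') δ) (S T : Finset (Fin n)) (hdisj : Disjoint S T)
    (hS : S.card ≤ s) (hT : T.card ≤ s') (w : S → ℝ) (v : T → ℝ) :
    ((colSub A S).mulVec w) ⬝ᵥ ((colSub A T).mulVec v) ≤
      δ / 2 * ((∑ j, w j ^ 2) + (∑ j, v j ^ 2)) := by
  set x := extend S w with hx
  set y := extend T v with hy
  have hxy : ∀ i, x i * y i = 0 := by
    intro i
    by_cases hiS : i ∈ S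
    · have : i ∉ T := Finset.disjoint_left.mp hdisj hiS
      rw [hy, extend_not_mem T v this, mul_zero]
    · rw [hx, extend_not_mem S w hiS, zero_mul]
  have hsparse_add : Sparse (s + s') (x + y) := by
    refine ⟨S ∪ T, le_trans (Finset.card_union_le S T) (add_le_add hS hT), fun i hi => ?_⟩
    simp only [Finset.mem_union, not_or] at hi
    simp [hx, hy, extend_not_mem S w hi.1, extend_not_mem T v hi.2]
  have hsparse_sub : Sparse (s + s') (x - y) := by
    refine ⟨S ∪ T, le_trans (Finset.card_union_le S T) (add_le_add hS hT), fun i hi => ?_⟩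
    simp only [Finset.mem_union, not_or] at hi
    simp [hx, hy, extend_not_mem S w hi.1, extend_not_mem T v hi.2]
  have hnorm_add : eucNorm (x + y) ^ 2 = (∑ j, w j ^ 2) + (∑ j, v j ^ 2) := by
    rw [enorm_sq, ← sum_sq_extend S w, ← sum_sq_extend T v, ← Finset.sum_add_distrib]
    exact Finset.sum_congr rfl fun i _ => by
      have := hxy i; simp only [Pi.add_apply]; linear_combination 2 * this
  have hnorm_sub : eucNorm (x - y) ^ 2 = (∑ j, w j ^ 2) + (∑ j, v j ^ 2) := by
    rw [enorm_sq, ← sum_sq_extend S w, ← sum_sq_extend T v, ← Finset.sum_add_distrib]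
    exact Finset.sum_congr rfl fun i _ => by
      have := hxy i; simp only [Pi.sub_apply]; linear_combination (-2) * this
  have hup := (hRIP (x + y) hsparse_add).2
  have hlo := (hRIP (x - y) hsparse_sub).1
  rw [hnorm_add] at hup
  rw [hnorm_sub] at hlo
  have hdot : ((colSub A S).mulVec w) ⬝ᵥ ((colSub A T).mulVec v) =
      (eucNorm (A.mulVec (x + y)) ^ 2 - eucNorm (A.mulVec (x - y)) ^ 2) / 4 := by
    rw [← mulVec_extend A S w, ← mulVec_extend A T v, dot_polar, enorm_sq, enorm_sq,
      Matrix.mulVec_add, Matrix.mulVec_sub]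
    simp [← hx, ← hy]
  rw [hdot]
  linarith

lemma inner_bound' {m n s s' : ℕ} (A : Matrix (Fin m) (Fin n) ℝ) (δ : ℝ)
    (hδ : 0 < δ) (hRIP : RIP A (s + s') δ) (S T : Finset (Fin n)) (hdisj : Disjoint S T)
    (hS : S.card ≤ s) (hT : T.card ≤ s') (w : S → ℝ) (v : T → ℝ) :
    ((colSub A S).mulVec w) ⬝ᵥ ((colSub A T).mulVec v) ≤ δ * eucNorm w * eucNorm v := by
  set a := eucNorm w with ha
  set b := eucNorm v with hb
  have ha0 : 0 ≤ a := enorm_nonneg w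
  have hb0 : 0 ≤ b := enorm_nonneg v
  rcases eq_or_lt_of_le ha0 with ha' | ha'
  · -- a = 0 : w = 0
    have hw : w = 0 := by
      funext j
      have hsum : ∑ j, w j ^ 2 = 0 := by rw [← enorm_sq, ← ha, ← ha']; ring
      have := (Finset.sum_eq_zero_iff_of_nonneg (fun i _ => sq_nonneg (w i))).mp hsum j
        (Finset.mem_univ j)
      exact pow_eq_zero_iff (n := 2) (by norm_num) |>.mp (this)
    rw [hw, Matrix.mulVec_zero, zero_dotProduct]
    positivity
  rcases eq_or_lt_of_le hb0 with hb' | hb'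
  · have hv : v = 0 := by
      funext j
      have hsum : ∑ j, v j ^ 2 = 0 := by rw [← enorm_sq, ← hb, ← hb']; ring
      have := (Finset.sum_eq_zero_iff_of_nonneg (fun i _ => sq_nonneg (v i))).mp hsum j
        (Finset.mem_univ j)
      exact pow_eq_zero_iff (n := 2) (by norm_num) |>.mp (this)
    rw [hv, Matrix.mulVec_zero, dotProduct_zero]
    positivity
  -- main case
  set c := Real.sqrt (b / a) with hc
  set d := Real.sqrt (a / b) with hd
  have hc2 : c ^ 2 = b / a := Real.sq_sqrt (by positivity)
  have hd2 : d ^ 2 = a / b := Real.sq_sqrt (by positivity)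
  have hcd : c * d = 1 := by
    rw [hc, hd, ← Real.sqrt_mul (by positivity)]
    rw [div_mul_div_comm, mul_comm b a, div_self (by positivity), Real.sqrt_one]
  have key := inner_bound A δ hRIP S T hdisj hS hT (c • w) (d • v)
  rw [Matrix.mulVec_smul, Matrix.mulVec_smul, smul_dotProduct,
    dotProduct_smul, smul_smul, smul_eq_mul, hcd, one_mul] at key
  have hsw : ∑ j, (c • w) j ^ 2 = a * b := by
    simp only [Pi.smul_apply, smul_eq_mul, mul_pow]
    rw [← Finset.mul_sum, ← enorm_sq, ← ha, hc2]
    field_simp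
  have hsv : ∑ j, (d • v) j ^ 2 = a * b := by
    simp only [Pi.smul_apply, smul_eq_mul, mul_pow]
    rw [← Finset.mul_sum, ← enorm_sq, ← hb, hd2]
    field_simp
  rw [hsw, hsv] at key
  calc ((colSub A S).mulVec w) ⬝ᵥ ((colSub A T).mulVec v) ≤ δ / 2 * (a * b + a * b) := key
    _ = δ * a * b := by ring

/-- `‖A_Sᵀ A_T‖₂ ≤ δ_{s+s'}` for disjoint `S`, `T`. -/
theorem stmt3 {m n s s' : ℕ} (A : Matrix (Fin m) (Fin n) ℝ) (δ : ℝ)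
    (hδ : δ ∈ Set.Ioo (0:ℝ) 1) (hRIP : RIP A (s + s') δ)
    (S T : Finset (Fin n)) (hdisj : Disjoint S T)
    (hS : S.card ≤ s) (hT : T.card ≤ s') :
    ∀ v : T → ℝ, eucNorm (((colSub A S).transpose * colSub A T).mulVec v) ≤ δ * eucNorm v := by
  intro v
  set u := (((colSub A S).transpose * colSub A T).mulVec v) with hu
  have hdot : u ⬝ᵥ u = ((colSub A S).mulVec u) ⬝ᵥ ((colSub A T).mulVec v) := by
    rw [hu, ← Matrix.mulVec_mulVec, Matrix.dotProduct_mulVec, Matrix.vecMul_transpose]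
  have hsq : eucNorm u ^ 2 = u ⬝ᵥ u := by
    rw [enorm_sq, dotProduct]
    exact Finset.sum_congr rfl fun i _ => by ring
  have hbound : eucNorm u ^ 2 ≤ δ * eucNorm u * eucNorm v := by
    rw [hsq, hdot]
    exact inner_bound' A δ hδ.1 hRIP S T hdisj hS hT u v
  rcases eq_or_lt_of_le (enorm_nonneg u) with h0 | h0
  · rw [← h0]
    exact mul_nonneg hδ.1.le (enorm_nonneg v)
  · nlinarith [hbound]
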